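/- Let s be a sequence of length L = R·C over n-th roots of unity with array entries S_{i,j} = ω^{p(i,j)}, ω = e^{2πi/n}, p ∈ ℤ[x,y]. If s possesses the Array Orthogonality Property for divisor C, then L ≤ n². -/

import Mathlib

/-- Periodic cross-correlation of two length-`R` sequences. -/
noncomputable def xcorr (R : ℕ) (a b : ℕ → ℂ) (τ : ℕ) : ℂ :=
  ∑ i ∈ Finset.range R, a i * (starRingEnd ℂ) (b ((i + τ) % R))

/-- The Array Orthogonality Property for an `R × C` array `S`. -/
def AOP (R C : ℕ) (S : ℕ → ℕ → ℂ) : Prop :=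
  (∀ τ j₀ j₁ : ℕ, j₀ < C → j₁ < C → j₀ ≠ j₁ →
      xcorr R (fun i => S i j₀) (fun i => S i j₁) τ = 0) ∧
  (∀ τ : ℕ, ¬ (R ∣ τ) →
      ∑ j ∈ Finset.range C, xcorr R (fun i => S i j) (fun i => S i j) τ = 0)

namespace AOPProof
open Complex Finset



noncomputable def rt (m : ℕ) : ℂ := Complex.exp (2 * Real.pi * Complex.I / m)

lemma two_pi_I_ne_zero : (2 * (Real.pi:ℂ) * Complex.I) ≠ 0 := by
  refine mul_ne_zero (mul_ne_zero two_ne_zero ?_) Complex.I_ne_zero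
  exact_mod_cast Complex.ofReal_ne_zero.mpr Real.pi_ne_zero

lemma rt_ne_zero (m : ℕ) : rt m ≠ 0 := Complex.exp_ne_zero _

lemma rt_conj (m : ℕ) : (starRingEnd ℂ) (rt m) = (rt m)⁻¹ := by
  unfold rt
  rw [← Complex.exp_conj, ← Complex.exp_neg]
  congr 1
  simp [map_div₀, Complex.conj_I, map_ofNat]
  ring

lemma rt_mul_conj (m : ℕ) : rt m * (starRingEnd ℂ) (rt m) = 1 := by
  rw [rt_conj]
  exact mul_inv_cancel₀ (rt_ne_zero m)

lemma rt_pow_self (m : ℕ) (hm : 0 < m) : (rt m) ^ m = 1 := by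
  unfold rt
  rw [← Complex.exp_nat_mul]
  have hm' : (m:ℂ) ≠ 0 := Nat.cast_ne_zero.mpr hm.ne'
  rw [show (m:ℂ) * (2 * Real.pi * Complex.I / m) = 2 * Real.pi * Complex.I by
    field_simp]
  exact Complex.exp_two_pi_mul_I

lemma rt_zpow_eq_one_iff (m : ℕ) (hm : 0 < m) (a : ℤ) :
    (rt m) ^ a = 1 ↔ (m:ℤ) ∣ a := by
  unfold rt
  rw [← Complex.exp_int_mul]
  rw [Complex.exp_eq_one_iff]
  have hm' : (m:ℂ) ≠ 0 := Nat.cast_ne_zero.mpr hm.ne'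
  constructor
  · rintro ⟨k, hk⟩
    refine ⟨k, ?_⟩
    have : (a:ℂ) * (2 * Real.pi * Complex.I) = (k:ℂ) * (2 * Real.pi * Complex.I) * m := by
      field_simp at hk
      linear_combination (2 * Real.pi * Complex.I) * hk
    have h2 : (a:ℂ) = (k:ℂ) * m := by
      have h3 := mul_right_cancel₀ two_pi_I_ne_zero
        (show (a:ℂ) * (2 * (Real.pi:ℂ) * Complex.I) = ((k:ℂ)*m) * (2 * (Real.pi:ℂ) * Complex.I) by
          linear_combination this)
      exact h3
    have h4 : a = k * m := by exact_mod_cast h2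
    rw [h4]; ring
  · rintro ⟨k, hk⟩
    refine ⟨k, ?_⟩
    subst hk
    push_cast
    field_simp

lemma rt_zpow_congr (m : ℕ) (hm : 0 < m) (a b : ℤ) (h : (m:ℤ) ∣ a - b) :
    (rt m) ^ a = (rt m) ^ b := by
  have h1 : (rt m) ^ (a - b) = 1 := (rt_zpow_eq_one_iff m hm _).mpr h
  rw [zpow_sub₀ (rt_ne_zero m)] at h1
  have hb : (rt m) ^ b ≠ 0 := zpow_ne_zero _ (rt_ne_zero m)
  field_simp at h1
  exact h1

lemma rt_pow_inj (m : ℕ) (hm : 0 < m) (s t : ℕ) (hs : s < m) (ht : t < m)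
    (h : (rt m) ^ s = (rt m) ^ t) : s = t := by
  have h' : (rt m) ^ ((s:ℤ) - t) = 1 := by
    rw [zpow_sub₀ (rt_ne_zero m), zpow_natCast, zpow_natCast, h]
    exact div_self (pow_ne_zero _ (rt_ne_zero m))
  have hd : (m:ℤ) ∣ (s:ℤ) - t := (rt_zpow_eq_one_iff m hm _).mp h'
  have hmod : (t:ℤ) % m = (s:ℤ) % m := Int.modEq_iff_dvd.mpr hd
  rw [Int.emod_eq_of_lt (by positivity) (by exact_mod_cast ht),
      Int.emod_eq_of_lt (by positivity) (by exact_mod_cast hs)] at hmod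
  exact_mod_cast hmod.symm

lemma sum_mod_shift {M : Type*} [AddCommMonoid M] (R : ℕ) (hR : 0 < R) (φ : ℕ → M) (i : ℕ) :
    ∑ τ ∈ Finset.range R, φ ((i + τ) % R) = ∑ x ∈ Finset.range R, φ x := by
  have hiR : i % R ≤ i := Nat.mod_le _ _
  have hiR' : i % R < R := Nat.mod_lt _ hR
  have hdm : R * (i / R) + i % R = i := Nat.div_add_mod i R
  refine Finset.sum_nbij' (fun τ => (i + τ) % R) (fun x => (x + (R - i % R)) % R)
    (fun a _ => Finset.mem_range.mpr (Nat.mod_lt _ hR))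
    (fun a _ => Finset.mem_range.mpr (Nat.mod_lt _ hR)) ?_ ?_ ?_
  · intro τ hτ
    rw [Finset.mem_range] at hτ
    show ((i + τ) % R + (R - i % R)) % R = τ
    rw [Nat.mod_add_mod]
    rw [show (i + τ) + (R - i % R) = τ + R * (i / R) + R by omega]
    rw [Nat.add_mod_right, Nat.add_mul_mod_self_left]
    exact Nat.mod_eq_of_lt hτ
  · intro x hx
    rw [Finset.mem_range] at hx
    show (i + (x + (R - i % R)) % R) % R = x
    rw [Nat.add_mod_mod]
    rw [show i + (x + (R - i % R)) = x + R * (i / R) + R by omega]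
    rw [Nat.add_mod_right, Nat.add_mul_mod_self_left]
    exact Nat.mod_eq_of_lt hx
  · intro τ _
    rfl

lemma pow_mod_eq (R : ℕ) (η : ℂ) (hη : η ^ R = 1) (m : ℕ) : η ^ (m % R) = η ^ m := by
  conv_rhs => rw [← Nat.div_add_mod m R]
  rw [pow_add, pow_mul, hη, one_pow, one_mul]

lemma dft_xcorr (R : ℕ) (hR : 0 < R) (a b : ℕ → ℂ) (η : ℂ) (hη : η ^ R = 1)
    (hu : η * (starRingEnd ℂ) η = 1) :
    ∑ τ ∈ range R, η ^ τ * xcorr R a b τ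
      = (∑ i ∈ range R, a i * (starRingEnd ℂ) (η ^ i)) *
        (starRingEnd ℂ) (∑ i ∈ range R, b i * (starRingEnd ℂ) (η ^ i)) := by
  have hui : ∀ i : ℕ, η ^ i * (starRingEnd ℂ) (η ^ i) = 1 := by
    intro i
    rw [map_pow, ← mul_pow, hu, one_pow]
  unfold xcorr
  calc ∑ τ ∈ range R, η ^ τ * ∑ i ∈ range R, a i * (starRingEnd ℂ) (b ((i + τ) % R))
      = ∑ τ ∈ range R, ∑ i ∈ range R, η ^ τ * (a i * (starRingEnd ℂ) (b ((i + τ) % R))) := by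
        refine Finset.sum_congr rfl fun τ _ => ?_
        rw [Finset.mul_sum]
    _ = ∑ i ∈ range R, ∑ τ ∈ range R, η ^ τ * (a i * (starRingEnd ℂ) (b ((i + τ) % R))) :=
        Finset.sum_comm
    _ = ∑ i ∈ range R, (a i * (starRingEnd ℂ) (η ^ i)) *
          ∑ τ ∈ range R, (fun x => η ^ x * (starRingEnd ℂ) (b x)) ((i + τ) % R) := by
        refine Finset.sum_congr rfl fun i _ => ?_
        rw [Finset.mul_sum]
        refine Finset.sum_congr rfl fun τ _ => ?_
        simp only []
        rw [pow_mod_eq R η hη (i + τ), pow_add]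
        linear_combination (-(η ^ τ * a i * (starRingEnd ℂ) (b ((i+τ)%R)))) * (hui i)
    _ = ∑ i ∈ range R, (a i * (starRingEnd ℂ) (η ^ i)) *
          ∑ x ∈ range R, η ^ x * (starRingEnd ℂ) (b x) := by
        refine Finset.sum_congr rfl fun i _ => ?_
        congr 1
        exact sum_mod_shift R hR (fun x => η ^ x * (starRingEnd ℂ) (b x)) i
    _ = (∑ i ∈ range R, a i * (starRingEnd ℂ) (η ^ i)) *
          ∑ x ∈ range R, η ^ x * (starRingEnd ℂ) (b x) := by
        rw [← Finset.sum_mul]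
    _ = _ := by
        congr 1
        rw [map_sum]
        refine Finset.sum_congr rfl fun x _ => ?_
        rw [map_mul, Complex.conj_conj]
        ring



lemma geom_orth (R : ℕ) (hR : 0 < R) (ζ : ℂ) (hζR : ζ ^ R = 1)
    (hprim : ∀ s t : ℕ, s < R → t < R → ζ ^ s = ζ ^ t → s = t)
    (hu : ζ * (starRingEnd ℂ) ζ = 1) (i i' : ℕ) (hi : i < R) (hi' : i' < R) :
    ∑ t ∈ range R, (starRingEnd ℂ) ((ζ ^ t) ^ i) * (ζ ^ t) ^ i'
      = if i = i' then (R : ℂ) else 0 := by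
  have huk : ∀ k : ℕ, ζ ^ k * (starRingEnd ℂ) (ζ ^ k) = 1 := fun k => by
    rw [map_pow, ← mul_pow, hu, one_pow]
  set μ : ℂ := (starRingEnd ℂ) (ζ ^ i) * ζ ^ i' with hμ
  have hterm : ∀ t : ℕ, (starRingEnd ℂ) ((ζ ^ t) ^ i) * (ζ ^ t) ^ i' = μ ^ t := by
    intro t
    rw [pow_right_comm ζ t i, pow_right_comm ζ t i', map_pow, ← mul_pow]
  rw [Finset.sum_congr rfl fun t _ => hterm t]
  by_cases hii : i = i'
  · subst hii
    rw [if_pos rfl]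
    have hμ1 : μ = 1 := by rw [hμ, mul_comm]; exact huk i
    simp [hμ1]
  · rw [if_neg hii]
    have hμR : μ ^ R = 1 := by
      rw [hμ, mul_pow, ← map_pow, pow_right_comm ζ i R, hζR, one_pow, map_one, one_mul,
          pow_right_comm ζ i' R, hζR, one_pow]
    have hμ1 : μ ≠ 1 := by
      intro h
      apply hii
      refine hprim i i' hi hi' ?_
      have : ζ ^ i * μ = ζ ^ i * 1 := by rw [h]
      rw [hμ, ← mul_assoc, huk i, one_mul, mul_one] at this
      exact this.symm
    rw [geom_sum_eq hμ1, hμR, sub_self, zero_div]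

lemma power_sum_kill (Z : Finset ℕ) (x w : ℕ → ℂ) (r : ℕ) (hcard : Z.card ≤ r)
    (hdist : ∀ s ∈ Z, ∀ t ∈ Z, x s = x t → s = t)
    (hrel : ∀ i < r, ∑ t ∈ Z, w t * (x t) ^ i = 0) : ∀ s ∈ Z, w s = 0 := by
  intro s hs
  set L : Polynomial ℂ := ∏ t ∈ Z.erase s, (Polynomial.X - Polynomial.C (x t)) with hL
  have hdeg : L.natDegree < r := by
    calc L.natDegree ≤ ∑ t ∈ Z.erase s, (Polynomial.X - Polynomial.C (x t)).natDegree :=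
          Polynomial.natDegree_prod_le _ _
      _ = (Z.erase s).card := by
          rw [Finset.sum_congr rfl fun t _ => Polynomial.natDegree_X_sub_C (x t)]
          simp
      _ < r := by
          have h1 : (Z.erase s).card < Z.card := Finset.card_erase_lt_of_mem hs
          omega
  have hkey : ∑ t ∈ Z, w t * L.eval (x t) = 0 := by
    calc ∑ t ∈ Z, w t * L.eval (x t)
        = ∑ t ∈ Z, ∑ i ∈ range r, L.coeff i * (w t * (x t) ^ i) := by
          refine Finset.sum_congr rfl fun t _ => ?_
          rw [Polynomial.eval_eq_sum_range' hdeg, Finset.mul_sum]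
          exact Finset.sum_congr rfl fun i _ => by ring
      _ = ∑ i ∈ range r, L.coeff i * ∑ t ∈ Z, w t * (x t) ^ i := by
          rw [Finset.sum_comm]
          exact Finset.sum_congr rfl fun i _ => by rw [Finset.mul_sum]
      _ = 0 := by
          refine Finset.sum_eq_zero fun i hi => ?_
          rw [hrel i (Finset.mem_range.mp hi), mul_zero]
  have hsum : ∑ t ∈ Z, w t * L.eval (x t) = w s * L.eval (x s) := by
    refine Finset.sum_eq_single s (fun t ht hts => ?_) (fun h => absurd hs h)
    have : L.eval (x t) = 0 := by
      rw [hL, Polynomial.eval_prod]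
      refine Finset.prod_eq_zero (Finset.mem_erase.mpr ⟨hts, ht⟩) ?_
      simp
    rw [this, mul_zero]
  have hLs : L.eval (x s) ≠ 0 := by
    rw [hL, Polynomial.eval_prod]
    rw [Finset.prod_ne_zero_iff]
    intro t ht
    rw [Finset.mem_erase] at ht
    simp only [Polynomial.eval_sub, Polynomial.eval_X, Polynomial.eval_C, sub_ne_zero]
    intro h
    exact ht.1 (hdist t ht.2 s hs h.symm)
  have := hkey.symm.trans hsum
  exact (mul_eq_zero.mp this.symm).resolve_right hLs

lemma inv_dft (R : ℕ) (hR : 0 < R) (ζ : ℂ) (hζR : ζ ^ R = 1)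
    (hprim : ∀ s t : ℕ, s < R → t < R → ζ ^ s = ζ ^ t → s = t)
    (hu : ζ * (starRingEnd ℂ) ζ = 1) (c : ℕ → ℂ) (i : ℕ) (hi : i < R) :
    ∑ t ∈ range R, (∑ i' ∈ range R, c i' * (starRingEnd ℂ) ((ζ ^ t) ^ i')) * (ζ ^ t) ^ i
      = (R : ℂ) * c i := by
  calc ∑ t ∈ range R, (∑ i' ∈ range R, c i' * (starRingEnd ℂ) ((ζ ^ t) ^ i')) * (ζ ^ t) ^ i
      = ∑ t ∈ range R, ∑ i' ∈ range R, c i' * ((starRingEnd ℂ) ((ζ ^ t) ^ i') * (ζ ^ t) ^ i) := by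
        refine Finset.sum_congr rfl fun t _ => ?_
        rw [Finset.sum_mul]
        exact Finset.sum_congr rfl fun i' _ => by ring
    _ = ∑ i' ∈ range R, c i' * ∑ t ∈ range R, (starRingEnd ℂ) ((ζ ^ t) ^ i') * (ζ ^ t) ^ i := by
        rw [Finset.sum_comm]
        exact Finset.sum_congr rfl fun i' _ => by rw [Finset.mul_sum]
    _ = ∑ i' ∈ range R, c i' * (if i' = i then (R:ℂ) else 0) := by
        refine Finset.sum_congr rfl fun i' hi' => ?_
        rw [geom_orth R hR ζ hζR hprim hu i' i (Finset.mem_range.mp hi') hi]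
    _ = (R : ℂ) * c i := by
        rw [Finset.sum_eq_single i]
        · rw [if_pos rfl]; ring
        · intro b _ hb; rw [if_neg hb, mul_zero]
        · intro h; exact absurd (Finset.mem_range.mpr hi) h

lemma parseval (R : ℕ) (hR : 0 < R) (ζ : ℂ) (hζR : ζ ^ R = 1)
    (hprim : ∀ s t : ℕ, s < R → t < R → ζ ^ s = ζ ^ t → s = t)
    (hu : ζ * (starRingEnd ℂ) ζ = 1) (c : ℕ → ℂ) (hc : ∀ i, c i * (starRingEnd ℂ) (c i) = 1) :
    ∑ t ∈ range R, (∑ i ∈ range R, c i * (starRingEnd ℂ) ((ζ ^ t) ^ i)) *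
      (starRingEnd ℂ) (∑ i ∈ range R, c i * (starRingEnd ℂ) ((ζ ^ t) ^ i))
      = (R : ℂ) * R := by
  have step1 : ∀ t : ℕ, (∑ i ∈ range R, c i * (starRingEnd ℂ) ((ζ ^ t) ^ i)) *
      (starRingEnd ℂ) (∑ i ∈ range R, c i * (starRingEnd ℂ) ((ζ ^ t) ^ i))
      = ∑ i ∈ range R, ∑ i' ∈ range R,
          (c i * (starRingEnd ℂ) (c i')) * ((starRingEnd ℂ) ((ζ ^ t) ^ i) * (ζ ^ t) ^ i') := by
    intro t
    rw [map_sum, Finset.sum_mul_sum]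
    refine Finset.sum_congr rfl fun i _ => Finset.sum_congr rfl fun i' _ => ?_
    rw [map_mul, Complex.conj_conj]
    ring
  calc ∑ t ∈ range R, (∑ i ∈ range R, c i * (starRingEnd ℂ) ((ζ ^ t) ^ i)) *
        (starRingEnd ℂ) (∑ i ∈ range R, c i * (starRingEnd ℂ) ((ζ ^ t) ^ i))
      = ∑ t ∈ range R, ∑ i ∈ range R, ∑ i' ∈ range R,
          (c i * (starRingEnd ℂ) (c i')) * ((starRingEnd ℂ) ((ζ ^ t) ^ i) * (ζ ^ t) ^ i') :=
        Finset.sum_congr rfl fun t _ => step1 t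
    _ = ∑ i ∈ range R, ∑ i' ∈ range R,
          (c i * (starRingEnd ℂ) (c i')) * ∑ t ∈ range R, (starRingEnd ℂ) ((ζ ^ t) ^ i) * (ζ ^ t) ^ i' := by
        rw [Finset.sum_comm]
        refine Finset.sum_congr rfl fun i _ => ?_
        rw [Finset.sum_comm]
        refine Finset.sum_congr rfl fun i' _ => ?_
        rw [Finset.mul_sum]
    _ = ∑ i ∈ range R, ∑ i' ∈ range R,
          (c i * (starRingEnd ℂ) (c i')) * (if i = i' then (R:ℂ) else 0) := by
        refine Finset.sum_congr rfl fun i hi => Finset.sum_congr rfl fun i' hi' => ?_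
        rw [geom_orth R hR ζ hζR hprim hu i i' (Finset.mem_range.mp hi) (Finset.mem_range.mp hi')]
    _ = ∑ i ∈ range R, (R : ℂ) := by
        refine Finset.sum_congr rfl fun i hi => ?_
        rw [Finset.sum_eq_single i]
        · rw [if_pos rfl, hc i, one_mul]
        · intro b _ hb; rw [if_neg (Ne.symm hb), mul_zero]
        · intro h; exact absurd hi h
    _ = (R : ℂ) * R := by
        rw [Finset.sum_const, Finset.card_range, nsmul_eq_mul]



end AOPProof

open AOPProof Finset in
/-- If the `R × C` array `S_{i,j} = ω^{p(i,j)}` (with `ω = e^{2πi/n}`, `p ∈ ℤ[x,y]`)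
has the Array Orthogonality Property for divisor `C`, then `L = R·C ≤ n²`. -/
theorem aop_polynomial_length_bound (R C n : ℕ) (hR : 0 < R) (hC : 0 < C) (hn : 0 < n)
    (p : MvPolynomial (Fin 2) ℤ)
    (ω : ℂ) (hω : ω = Complex.exp (2 * Real.pi * Complex.I / n))
    (S : ℕ → ℕ → ℂ)
    (hS : ∀ i j : ℕ, S i j = ω ^ (MvPolynomial.eval ![(i : ℤ), (j : ℤ)] p))
    (hAOP : AOP R C S) : R * C ≤ n ^ 2 := by
  obtain ⟨hA1, hA2⟩ := hAOP
  have hωrt : ω = rt n := hω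
  -- congruence of S under mod-n equality of indices
  have hScongr : ∀ i i' j j' : ℕ, ((i : ZMod n) = (i' : ZMod n)) →
      ((j : ZMod n) = (j' : ZMod n)) → S i j = S i' j' := by
    intro i i' j j' hi hj
    rw [hS, hS, hωrt]
    apply rt_zpow_congr n hn
    set a := MvPolynomial.eval ![(i : ℤ), (j : ℤ)] p with ha
    set b := MvPolynomial.eval ![(i' : ℤ), (j' : ℤ)] p with hb
    have key : ((a : ZMod n)) = ((b : ZMod n)) := by
      rw [ha, hb]
      have hv := MvPolynomial.eval₂_comp_left (Int.castRingHom (ZMod n)) (RingHom.id ℤ)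
        ![(i : ℤ), (j : ℤ)] p
      have hw := MvPolynomial.eval₂_comp_left (Int.castRingHom (ZMod n)) (RingHom.id ℤ)
        ![(i' : ℤ), (j' : ℤ)] p
      rw [MvPolynomial.eval₂_id] at hv hw
      have hvw : (⇑(Int.castRingHom (ZMod n)) ∘ ![(i : ℤ), (j : ℤ)])
          = (⇑(Int.castRingHom (ZMod n)) ∘ ![(i' : ℤ), (j' : ℤ)]) := by
        funext x
        fin_cases x
        · simpa using hi
        · simpa using hj
      have : (Int.castRingHom (ZMod n)) (MvPolynomial.eval ![(i : ℤ), (j : ℤ)] p)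
          = (Int.castRingHom (ZMod n)) (MvPolynomial.eval ![(i' : ℤ), (j' : ℤ)] p) := by
        rw [hv, hw, hvw]
      exact this
    have : (((a - b : ℤ)) : ZMod n) = 0 := by
      push_cast
      rw [key]
      ring
    exact_mod_cast (ZMod.intCast_zmod_eq_zero_iff_dvd _ _).mp this
  have hSrow : ∀ i j : ℕ, S (i + n) j = S i j := by
    intro i j
    refine hScongr _ _ _ _ ?_ rfl
    push_cast
    simp [ZMod.natCast_self]
  have hSmod : ∀ a b j : ℕ, a % n = b % n → S a j = S b j := by
    intro a b j h
    exact hScongr _ _ _ _ ((ZMod.natCast_eq_natCast_iff a b n).mpr h) rfl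
  have hSunit : ∀ i j : ℕ, S i j * (starRingEnd ℂ) (S i j) = 1 := by
    intro i j
    rw [hS, hωrt, map_zpow₀, ← mul_zpow, rt_mul_conj, one_zpow]
  have hSnorm : ∀ i j : ℕ, ‖S i j‖ = 1 := by
    intro i j
    have h := hSunit i j
    rw [Complex.mul_conj] at h
    have : Complex.normSq (S i j) = 1 := by exact_mod_cast h
    rw [Complex.norm_def, this, Real.sqrt_one]
  -- the zero-shift autocorrelation sum
  have hxjj0 : ∑ j ∈ range C, xcorr R (fun i => S i j) (fun i => S i j) 0 = (R : ℂ) * C := by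
    unfold xcorr
    calc ∑ j ∈ range C, ∑ i ∈ range R, S i j * (starRingEnd ℂ) (S ((i + 0) % R) j)
        = ∑ j ∈ range C, ∑ i ∈ range R, (1 : ℂ) := by
          refine Finset.sum_congr rfl fun j _ => Finset.sum_congr rfl fun i hi => ?_
          rw [add_zero, Nat.mod_eq_of_lt (Finset.mem_range.mp hi)]
          exact hSunit i j
      _ = (R : ℂ) * C := by
          simp [mul_comm]
  -- Column bound : C ≤ n
  have hCn : C ≤ n := by
    by_contra hcon
    push_neg at hcon
    have hxc := hA1 0 0 n hC hcon (by omega)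
    have hcol : ∀ i : ℕ, S i n = S i 0 := by
      intro i
      refine hScongr _ _ _ _ rfl ?_
      simp [ZMod.natCast_self]
    have : xcorr R (fun i => S i 0) (fun i => S i n) 0 = (R : ℂ) := by
      unfold xcorr
      calc ∑ i ∈ range R, S i 0 * (starRingEnd ℂ) (S ((i + 0) % R) n)
          = ∑ i ∈ range R, (1:ℂ) := by
            refine Finset.sum_congr rfl fun i hi => ?_
            rw [add_zero, Nat.mod_eq_of_lt (Finset.mem_range.mp hi), hcol]
            exact hSunit i 0
        _ = (R : ℂ) := by simp
    rw [hxc] at this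
    exact absurd this.symm (Nat.cast_ne_zero.mpr hR.ne')
  rcases le_or_gt R n with hRn | hRn
  · calc R * C ≤ n * n := Nat.mul_le_mul hRn hCn
      _ = n ^ 2 := (sq n).symm
  -- now n < R
  have hndvdR : ¬ R ∣ n := fun h => absurd (Nat.le_of_dvd hn h) (not_le.mpr hRn)
  by_cases hdvd : n ∣ R
  · exfalso
    have h0 := hA2 n hndvdR
    have heval : ∑ j ∈ range C, xcorr R (fun i => S i j) (fun i => S i j) n = (R : ℂ) * C := by
      unfold xcorr
      calc ∑ j ∈ range C, ∑ i ∈ range R, S i j * (starRingEnd ℂ) (S ((i + n) % R) j)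
          = ∑ j ∈ range C, ∑ i ∈ range R, (1:ℂ) := by
            refine Finset.sum_congr rfl fun j _ => Finset.sum_congr rfl fun i _ => ?_
            have : S ((i + n) % R) j = S i j := by
              apply hSmod
              rw [Nat.mod_mod_of_dvd _ hdvd, Nat.add_mod_right]
            rw [this]
            exact hSunit i j
        _ = (R : ℂ) * C := by simp [mul_comm]
    rw [h0] at heval
    have hRne : (R : ℂ) ≠ 0 := Nat.cast_ne_zero.mpr hR.ne'
    have hCne : (C : ℂ) ≠ 0 := Nat.cast_ne_zero.mpr hC.ne'
    exact absurd heval.symm (mul_ne_zero hRne hCne)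
  -- ¬ n ∣ R : prove R < 2n
  have hR2n : R < 2 * n := by
    have h0 := hA2 n hndvdR
    have hsplit : ∀ j : ℕ, xcorr R (fun i => S i j) (fun i => S i j) n
        = ((R - n : ℕ) : ℂ) + ∑ i ∈ Ico (R - n) R, S i j * (starRingEnd ℂ) (S ((i + n) % R) j) := by
      intro j
      unfold xcorr
      rw [range_eq_Ico, ← Finset.sum_Ico_consecutive _ (Nat.zero_le (R - n)) (by omega : R - n ≤ R)]
      congr 1
      calc ∑ i ∈ Ico 0 (R - n), S i j * (starRingEnd ℂ) (S ((i + n) % R) j)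
          = ∑ i ∈ Ico 0 (R - n), (1 : ℂ) := by
            refine Finset.sum_congr rfl fun i hi => ?_
            rw [Finset.mem_Ico] at hi
            rw [Nat.mod_eq_of_lt (by omega), hSrow i j]
            exact hSunit i j
        _ = ((R - n : ℕ) : ℂ) := by simp
    have h0' : ((C * (R - n) : ℕ) : ℂ)
        = - ∑ j ∈ range C, ∑ i ∈ Ico (R - n) R, S i j * (starRingEnd ℂ) (S ((i + n) % R) j) := by
      have := h0
      rw [Finset.sum_congr rfl fun j _ => hsplit j, Finset.sum_add_distrib,
          Finset.sum_const, Finset.card_range] at this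
      push_cast at this ⊢
      linear_combination this
    have hnorm : ((C * (R - n) : ℕ) : ℝ) ≤ ((C * n : ℕ) : ℝ) := by
      have h1 : ‖((C * (R - n) : ℕ) : ℂ)‖ ≤ ((C * n : ℕ) : ℝ) := by
        rw [h0', norm_neg]
        calc ‖∑ j ∈ range C, ∑ i ∈ Ico (R - n) R, S i j * (starRingEnd ℂ) (S ((i + n) % R) j)‖
            ≤ ∑ j ∈ range C, ‖∑ i ∈ Ico (R - n) R, S i j * (starRingEnd ℂ) (S ((i + n) % R) j)‖ :=
              norm_sum_le _ _
          _ ≤ ∑ j ∈ range C, ∑ i ∈ Ico (R - n) R, ‖S i j * (starRingEnd ℂ) (S ((i + n) % R) j)‖ :=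
              Finset.sum_le_sum fun j _ => norm_sum_le _ _
          _ = ∑ j ∈ range C, ∑ i ∈ Ico (R - n) R, (1:ℝ) := by
              refine Finset.sum_congr rfl fun j _ => Finset.sum_congr rfl fun i _ => ?_
              rw [norm_mul, hSnorm]
              have : ‖(starRingEnd ℂ) (S ((i + n) % R) j)‖ = ‖S ((i + n) % R) j‖ :=
                RCLike.norm_conj _
              rw [this, hSnorm, one_mul]
          _ = ((C * n : ℕ) : ℝ) := by
              rw [Finset.sum_congr rfl fun j _ => Finset.sum_const (1:ℝ)]
              rw [Finset.sum_const, Nat.card_Ico, Finset.card_range]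
              rw [show R - (R - n) = n by omega]
              push_cast
              ring
      calc ((C * (R - n) : ℕ) : ℝ) = ‖((C * (R - n) : ℕ) : ℂ)‖ := by
            rw [Complex.norm_natCast]
        _ ≤ ((C * n : ℕ) : ℝ) := h1
    have hle : C * (R - n) ≤ C * n := by exact_mod_cast hnorm
    have hRn2 : R - n ≤ n := Nat.le_of_mul_le_mul_left hle hC
    have : R ≠ 2 * n := by
      intro h
      exact hdvd ⟨2, by omega⟩
    omega
  -- spectral machinery
  classical
  set ζ : ℂ := rt R with hζdef
  have hζR : ζ ^ R = 1 := rt_pow_self R hR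
  have hζu : ζ * (starRingEnd ℂ) ζ = 1 := rt_mul_conj R
  have hζprim : ∀ s t : ℕ, s < R → t < R → ζ ^ s = ζ ^ t → s = t :=
    fun s t hs ht h => rt_pow_inj R hR s t hs ht h
  have hηR : ∀ t : ℕ, (ζ ^ t) ^ R = 1 := fun t => by rw [pow_right_comm, hζR, one_pow]
  have hηu : ∀ t : ℕ, (ζ ^ t) * (starRingEnd ℂ) (ζ ^ t) = 1 := fun t => by
    rw [map_pow, ← mul_pow, hζu, one_pow]
  set F : ℕ → ℕ → ℂ := fun j t => ∑ i ∈ range R, S i j * (starRingEnd ℂ) ((ζ ^ t) ^ i)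
    with hFdef0
  have hFdef : ∀ j t : ℕ, F j t = ∑ i ∈ range R, S i j * (starRingEnd ℂ) ((ζ ^ t) ^ i) :=
    fun j t => rfl
  have h1' : ∀ (t j0 j1 : ℕ), j0 < C → j1 < C → j0 ≠ j1 →
      F j0 t * (starRingEnd ℂ) (F j1 t) = 0 := by
    intro t j0 j1 hj0 hj1 hne
    have e := dft_xcorr R hR (fun i => S i j0) (fun i => S i j1) (ζ ^ t) (hηR t) (hηu t)
    rw [hFdef, hFdef, ← e]
    exact Finset.sum_eq_zero fun τ _ => by rw [hA1 τ j0 j1 hj0 hj1 hne, mul_zero]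
  have h2' : ∀ t : ℕ, ∑ j ∈ range C, F j t * (starRingEnd ℂ) (F j t) = (R : ℂ) * C := by
    intro t
    have hjj : ∀ j : ℕ, F j t * (starRingEnd ℂ) (F j t)
        = ∑ τ ∈ range R, (ζ ^ t) ^ τ * xcorr R (fun i => S i j) (fun i => S i j) τ := by
      intro j
      have e := dft_xcorr R hR (fun i => S i j) (fun i => S i j) (ζ ^ t) (hηR t) (hηu t)
      rw [hFdef, e]
    calc ∑ j ∈ range C, F j t * (starRingEnd ℂ) (F j t)
        = ∑ j ∈ range C, ∑ τ ∈ range R, (ζ ^ t) ^ τ * xcorr R (fun i => S i j) (fun i => S i j) τ :=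
          Finset.sum_congr rfl fun j _ => hjj j
      _ = ∑ τ ∈ range R, (ζ ^ t) ^ τ * ∑ j ∈ range C, xcorr R (fun i => S i j) (fun i => S i j) τ := by
          rw [Finset.sum_comm]
          exact Finset.sum_congr rfl fun τ _ => (Finset.mul_sum _ _ _).symm
      _ = (R : ℂ) * C := by
          rw [Finset.sum_eq_single_of_mem 0 (Finset.mem_range.mpr hR)]
          · rw [pow_zero, one_mul, hxjj0]
          · intro τ hτ hτ0
            rw [hA2 τ (fun hdv => hτ0 (Nat.eq_zero_of_dvd_of_lt hdv (Finset.mem_range.mp hτ))),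
              mul_zero]
  have hRCne : (R : ℂ) * C ≠ 0 :=
    mul_ne_zero (Nat.cast_ne_zero.mpr hR.ne') (Nat.cast_ne_zero.mpr hC.ne')
  have flat : ∀ t j : ℕ, j < C → F j t ≠ 0 →
      F j t * (starRingEnd ℂ) (F j t) = (R : ℂ) * C := by
    intro t j hj hne
    have h := h2' t
    rw [Finset.sum_eq_single_of_mem j (Finset.mem_range.mpr hj)] at h
    · exact h
    · intro j' hj' hne'
      have hz := h1' t j j' hj (Finset.mem_range.mp hj') (Ne.symm hne')
      have hconj : (starRingEnd ℂ) (F j' t) = 0 := by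
        rcases mul_eq_zero.mp hz with h' | h'
        · exact absurd h' hne
        · exact h'
      have hF0 : F j' t = 0 := by
        have h2 := congrArg (starRingEnd ℂ) hconj
        rwa [Complex.conj_conj, map_zero] at h2
      rw [hF0, zero_mul]
  have cover : ∃ j : ℕ, j < C ∧ F j 1 ≠ 0 := by
    by_contra h
    push_neg at h
    have hzero : ∑ j ∈ range C, F j 1 * (starRingEnd ℂ) (F j 1) = 0 :=
      Finset.sum_eq_zero fun j hj => by rw [h j (Finset.mem_range.mp hj), zero_mul]
    rw [h2' 1] at hzero
    exact hRCne hzero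
  obtain ⟨js, hjsC, hjs⟩ := cover
  set Z : Finset ℕ := (range R).filter (fun t => F js t ≠ 0) with hZdef
  have h1Z : 1 ∈ Z := Finset.mem_filter.mpr ⟨Finset.mem_range.mpr (by omega), hjs⟩
  have hpars : ∑ t ∈ range R, F js t * (starRingEnd ℂ) (F js t) = (R : ℂ) * R := by
    have hp := parseval R hR ζ hζR hζprim hζu (fun i => S i js) (fun i => hSunit i js)
    rw [← hp]
  have hZsum : ∑ t ∈ range R, F js t * (starRingEnd ℂ) (F js t)
      = (Z.card : ℂ) * ((R : ℂ) * C) := by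
    rw [← Finset.sum_filter_add_sum_filter_not (range R) (fun t => F js t ≠ 0)]
    have hfirst : ∑ t ∈ (range R).filter (fun t => F js t ≠ 0), F js t * (starRingEnd ℂ) (F js t)
        = (Z.card : ℂ) * ((R : ℂ) * C) := by
      rw [Finset.sum_congr rfl (fun t ht => flat t js hjsC (Finset.mem_filter.mp ht).2)]
      rw [Finset.sum_const, nsmul_eq_mul]
    have hsecond : ∑ t ∈ (range R).filter (fun t => ¬ F js t ≠ 0),
        F js t * (starRingEnd ℂ) (F js t) = 0 :=
      Finset.sum_eq_zero fun t ht => by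
        have h2 := (Finset.mem_filter.mp ht).2
        push_neg at h2
        rw [h2, zero_mul]
    rw [hfirst, hsecond, add_zero]
  have hkC : Z.card * C = R := by
    have hcx : (Z.card : ℂ) * ((R : ℂ) * C) = (R : ℂ) * R := by rw [← hZsum, hpars]
    have hnat : Z.card * (R * C) = R * R := by exact_mod_cast hcx
    refine Nat.eq_of_mul_eq_mul_left hR ?_
    calc R * (Z.card * C) = Z.card * (R * C) := by ring
      _ = R * R := hnat
  by_cases hk : Z.card ≤ R - n
  · exfalso
    have hZsub : ∀ t ∈ Z, t < R := fun t ht => Finset.mem_range.mp (Finset.mem_filter.mp ht).1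
    have hinvZ : ∀ i : ℕ, i < R → ∑ t ∈ Z, F js t * (ζ ^ t) ^ i = (R : ℂ) * S i js := by
      intro i hi
      have hfull : ∑ t ∈ range R, F js t * (ζ ^ t) ^ i = (R : ℂ) * S i js := by
        have hid := inv_dft R hR ζ hζR hζprim hζu (fun i' => S i' js) i hi
        rw [← hid]
      rw [← hfull]
      rw [← Finset.sum_filter_add_sum_filter_not (range R) (fun t => F js t ≠ 0)
        (fun t => F js t * (ζ ^ t) ^ i)]
      have hz2 : ∑ t ∈ (range R).filter (fun t => ¬ F js t ≠ 0), F js t * (ζ ^ t) ^ i = 0 :=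
        Finset.sum_eq_zero fun t ht => by
          have h2 := (Finset.mem_filter.mp ht).2
          push_neg at h2
          rw [h2, zero_mul]
      rw [hz2, add_zero]
    have hrel : ∀ i, i < R - n → ∑ t ∈ Z, (F js t * ((ζ ^ t) ^ n - 1)) * (ζ ^ t) ^ i = 0 := by
      intro i hi
      have e1 := hinvZ i (by omega)
      have e2 := hinvZ (i + n) (by omega)
      have hSS : S (i + n) js = S i js := hSrow i js
      calc ∑ t ∈ Z, (F js t * ((ζ ^ t) ^ n - 1)) * (ζ ^ t) ^ i
          = ∑ t ∈ Z, (F js t * (ζ ^ t) ^ (i + n) - F js t * (ζ ^ t) ^ i) := by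
            refine Finset.sum_congr rfl fun t _ => ?_
            rw [pow_add]
            ring
        _ = (∑ t ∈ Z, F js t * (ζ ^ t) ^ (i + n)) - ∑ t ∈ Z, F js t * (ζ ^ t) ^ i :=
            Finset.sum_sub_distrib _ _
        _ = (R : ℂ) * S (i + n) js - (R : ℂ) * S i js := by rw [e1, e2]
        _ = 0 := by rw [hSS]; ring
    have hkill := power_sum_kill Z (fun t => ζ ^ t) (fun t => F js t * ((ζ ^ t) ^ n - 1))
      (R - n) hk (fun s hs t ht h => hζprim s t (hZsub s hs) (hZsub t ht) h) hrel
    have h1k := hkill 1 h1Z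
    have hζn1 : (ζ ^ 1) ^ n - 1 = 0 := by
      rcases mul_eq_zero.mp h1k with h' | h'
      · exact absurd h' hjs
      · exact h'
    have hζn : ζ ^ n = 1 := by
      have h2 := sub_eq_zero.mp hζn1
      rwa [pow_one] at h2
    have hdvdRn : (R : ℤ) ∣ (n : ℤ) := by
      apply (rt_zpow_eq_one_iff R hR (n : ℤ)).mp
      rw [zpow_natCast, ← hζdef]
      exact hζn
    exact hndvdR (by exact_mod_cast hdvdRn)
  · push_neg at hk
    have hn2 : 2 ≤ n := by
      rcases Nat.lt_or_ge n 2 with h | h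
      · have hn1 : n = 1 := by omega
        exact absurd (hn1 ▸ one_dvd R) hdvd
      · exact h
    by_cases hn3 : 3 ≤ n
    · have hr1 : 1 ≤ R - n := by omega
      have hr2 : R - n ≤ n - 1 := by omega
      have h6 : C * Z.card = R := by rw [mul_comm]; exact hkC
      have hCk : C * (R - n + 1) ≤ C * Z.card := Nat.mul_le_mul_left C (by omega)
      have h7 : R * (C * (R - n + 1)) ≤ R * R := Nat.mul_le_mul_left R (le_of_le_of_eq hCk h6)
      have h8 : R * R ≤ n ^ 2 * (R - n + 1) := by
        obtain ⟨r, hRr⟩ : ∃ r : ℕ, R = n + r := ⟨R - n, by omega⟩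
        have hra : 1 ≤ r := by omega
        have hrb : r + 1 ≤ n := by omega
        have ha : 2 * n + r ≤ n * n := by nlinarith
        have hb : (2 * n + r) * r ≤ (n * n) * r := Nat.mul_le_mul_right r ha
        subst hRr
        have : (n + r) * (n + r) = n * n + (2 * n + r) * r := by ring
        rw [this]
        have h2 : n ^ 2 * (r + 1 - 1 + 1) = n * n + n * n * r := by
          rw [show r + 1 - 1 + 1 = r + 1 by omega]
          ring
        rw [show n + r - n + 1 = r + 1 by omega]
        nlinarith
      have h9 : R * C * (R - n + 1) ≤ n ^ 2 * (R - n + 1) := by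
        calc R * C * (R - n + 1) = R * (C * (R - n + 1)) := by ring
          _ ≤ R * R := h7
          _ ≤ n ^ 2 * (R - n + 1) := h8
      exact Nat.le_of_mul_le_mul_right h9 (by omega)
    · have hn2' : n = 2 := by omega
      have hR3 : R = 3 := by omega
      have hkc3 : Z.card * C = 3 := by rw [hkC, hR3]
      have hk2 : 2 ≤ Z.card := by omega
      have hC1 : C = 1 := by
        by_contra hC'
        have hC2 : 2 ≤ C := by omega
        have h4 : 4 ≤ Z.card * C := Nat.mul_le_mul hk2 hC2
        omega
      rw [hR3, hC1, hn2']
      norm_num
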